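/- Let r ≥ 2, let a = (a_1,…,a_r) be a sequence of positive integers, and let D be a common multiple of a_1,…,a_r. Then p_a(n) is a quasi-polynomial of degree r − 1 with period D: there exist functions d_0, d_1, …, d_{r−1} : ℕ → ℚ such that d_m(n + D) = d_m(n) for all 0 ≤ m ≤ r − 1 and all n ≥ 0, p_a(n) = d_{r−1}(n)·n^{r−1} + ⋯ + d_1(n)·n + d_0(n) for all n ≥ 0, and d_{r−1} is not identically zero. -/

import Mathlib

open Polynomial Finset

lemma asc_prod (n : ℕ) : ∀ m : ℕ, ∏ i ∈ range m, (n + 1 + i) = (n + 1).ascFactorial m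
  | 0 => rfl
  | m + 1 => by
    rw [prod_range_succ, asc_prod n m, Nat.ascFactorial, mul_comm]

lemma starsBars (r k : ℕ) (hr : 1 ≤ r) :
    Nat.card {z : Fin r → ℕ // ∑ i, z i = k} = (k + (r - 1)).choose (r - 1) := by
  have e : {z : Fin r → ℕ // ∑ i, z i = k} ≃ Sym (Fin r) k := by
    refine Equiv.subtypeEquiv
      (Finsupp.equivFunOnFinite.symm.trans Multiset.toFinsupp.symm.toEquiv) ?_
    intro z
    have : Multiset.card ((Finsupp.equivFunOnFinite.symm.trans
        Multiset.toFinsupp.symm.toEquiv) z) = ∑ i, z i := by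
      show Multiset.card (Multiset.toFinsupp.symm (Finsupp.equivFunOnFinite.symm z)) = _
      rw [Multiset.toFinsupp_symm_apply, Finsupp.card_toMultiset,
        Finsupp.sum_fintype _ _ (fun _ => rfl)]
      rfl
    rw [this]
  rw [Nat.card_congr e, Nat.card_eq_fintype_card, Sym.card_sym_eq_choose, Fintype.card_fin]
  have h1 : r + k - 1 = k + (r - 1) := by omega
  rw [h1, ← Nat.choose_symm (by omega : k ≤ k + (r - 1))]
  congr 1
  omega

noncomputable def Tpoly (q D s : ℕ) : Polynomial ℚ :=
  C (((q.factorial : ℚ) * (D : ℚ) ^ q)⁻¹) *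
    ∏ i ∈ range q, (X + C ((((i + 1) * D : ℕ) : ℚ) - (s : ℚ)))

lemma Tpoly_natDegree_le (q D s : ℕ) : (Tpoly q D s).natDegree ≤ q := by
  refine le_trans (natDegree_C_mul_le _ _) (le_trans (natDegree_prod_le _ _) (le_of_eq ?_))
  calc ∑ i ∈ range q, (X + C ((((i + 1) * D : ℕ) : ℚ) - (s : ℚ))).natDegree
      = ∑ _i ∈ range q, 1 := Finset.sum_congr rfl fun i _ => natDegree_X_add_C _
    _ = q := by simp

lemma Tpoly_coeff_q (q D s : ℕ) :
    (Tpoly q D s).coeff q = ((q.factorial : ℚ) * (D : ℚ) ^ q)⁻¹ := by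
  unfold Tpoly
  rw [coeff_C_mul]
  have hm : (∏ i ∈ range q, (X + C ((((i + 1) * D : ℕ) : ℚ) - (s : ℚ)))).Monic :=
    monic_prod_of_monic _ _ fun i _ => monic_X_add_C _
  have hdeg : (∏ i ∈ range q, (X + C ((((i + 1) * D : ℕ) : ℚ) - (s : ℚ)))).natDegree = q := by
    rw [natDegree_prod _ _ fun i _ => X_add_C_ne_zero _]
    calc ∑ i ∈ range q, (X + C ((((i + 1) * D : ℕ) : ℚ) - (s : ℚ))).natDegree
        = ∑ _i ∈ range q, 1 := Finset.sum_congr rfl fun i _ => natDegree_X_add_C _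
      _ = q := by simp
  have hc := hm.coeff_natDegree
  rw [hdeg] at hc
  rw [hc, mul_one]

lemma Tpoly_eval_of_eq (q D s k n : ℕ) (hD : 0 < D) (h : n = s + D * k) :
    (Tpoly q D s).eval (n : ℚ) = ((k + q).choose q : ℚ) := by
  unfold Tpoly
  rw [eval_mul, eval_C, eval_prod]
  have hfac : ∀ i ∈ range q,
      eval (n : ℚ) (X + C ((((i + 1) * D : ℕ) : ℚ) - (s : ℚ)))
        = (D : ℚ) * ((k : ℚ) + i + 1) := by
    intro i _
    rw [eval_add, eval_X, eval_C]
    push_cast [h]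
    ring
  rw [Finset.prod_congr rfl hfac, Finset.prod_mul_distrib, Finset.prod_const, Finset.card_range]
  have hprod : ∏ i ∈ range q, ((k : ℚ) + i + 1) = ((q.factorial * (k + q).choose q : ℕ) : ℚ) := by
    rw [← Nat.ascFactorial_eq_factorial_mul_choose, ← asc_prod]
    push_cast
    apply Finset.prod_congr rfl
    intro i _
    ring
  rw [hprod]
  have h1 : (q.factorial : ℚ) ≠ 0 := Nat.cast_ne_zero.2 q.factorial_ne_zero
  have h2 : (D : ℚ) ^ q ≠ 0 := pow_ne_zero _ (Nat.cast_ne_zero.2 hD.ne')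
  push_cast
  field_simp

lemma Tpoly_eval_of_gt (q D s n j : ℕ) (h : s = n + D * j) (hj1 : 1 ≤ j) (hj2 : j ≤ q) :
    (Tpoly q D s).eval (n : ℚ) = 0 := by
  unfold Tpoly
  rw [eval_mul, eval_prod]
  have hmem : j - 1 ∈ range q := mem_range.2 (by omega)
  rw [Finset.prod_eq_zero hmem, mul_zero]
  rw [eval_add, eval_X, eval_C]
  have : ((j - 1 + 1) : ℕ) = j := by omega
  rw [this]
  push_cast [h]
  ring

lemma Z_finite (r D s n : ℕ) (hD : 0 < D) :
    Finite {z : Fin r → ℕ // s + D * ∑ i, z i = n} := by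
  have hbound : ∀ z : {z : Fin r → ℕ // s + D * ∑ i, z i = n}, ∀ i, z.1 i < n + 1 := by
    intro z i
    have h1 : z.1 i ≤ ∑ j, z.1 j :=
      Finset.single_le_sum (fun j _ => Nat.zero_le _) (Finset.mem_univ i)
    have h2 : ∑ j, z.1 j ≤ D * ∑ j, z.1 j := Nat.le_mul_of_pos_left _ hD
    have h3 := z.2
    omega
  refine Finite.of_injective
    (fun z => (fun i => (⟨z.1 i, hbound z i⟩ : Fin (n + 1)) : Fin r → Fin (n + 1))) ?_
  intro z w h
  ext i
  exact congrArg Fin.val (congrFun h i)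

lemma X_finite (r : ℕ) (a : Fin r → ℕ) (ha : ∀ i, 0 < a i) (n : ℕ) :
    Finite {x : Fin r → ℕ // ∑ i, a i * x i = n} := by
  have hbound : ∀ x : {x : Fin r → ℕ // ∑ i, a i * x i = n}, ∀ i, x.1 i < n + 1 := by
    intro x i
    have h1 : a i * x.1 i ≤ ∑ j, a j * x.1 j :=
      Finset.single_le_sum (f := fun j => a j * x.1 j) (fun j _ => Nat.zero_le _)
        (Finset.mem_univ i)
    have h2 : x.1 i ≤ a i * x.1 i := Nat.le_mul_of_pos_left _ (ha i)
    have h3 := x.2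
    omega
  refine Finite.of_injective
    (fun x => (fun i => (⟨x.1 i, hbound x i⟩ : Fin (n + 1)) : Fin r → Fin (n + 1))) ?_
  intro z w h
  ext i
  exact congrArg Fin.val (congrFun h i)

lemma Zcard_eq (r D s n k : ℕ) (hr : 1 ≤ r) (hD : 0 < D) (h : n = s + D * k) :
    Nat.card {z : Fin r → ℕ // s + D * ∑ i, z i = n} = (k + (r - 1)).choose (r - 1) := by
  rw [← starsBars r k hr]
  refine Nat.card_congr (Equiv.subtypeEquivRight fun z => ?_)
  subst h
  constructor
  · intro h'
    exact Nat.eq_of_mul_eq_mul_left hD (Nat.add_left_cancel h')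
  · intro h'
    rw [h']

lemma Zcard_zero (r D s n : ℕ) (h : ∀ k, n ≠ s + D * k) :
    Nat.card {z : Fin r → ℕ // s + D * ∑ i, z i = n} = 0 := by
  have : IsEmpty {z : Fin r → ℕ // s + D * ∑ i, z i = n} :=
    ⟨fun z => h (∑ i, z.1 i) z.2.symm⟩
  exact Nat.card_of_isEmpty

lemma decomp (r : ℕ) (a : Fin r → ℕ) (ha : ∀ i, 0 < a i) (D : ℕ) (hD : 0 < D)
    (hDa : ∀ i, a i ∣ D) (n : ℕ) :
    Nat.card {x : Fin r → ℕ // ∑ i, a i * x i = n}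
      = ∑ y : (∀ i, Fin (D / a i)),
          Nat.card {z : Fin r → ℕ // (∑ i, a i * (y i : ℕ)) + D * ∑ i, z i = n} := by
  have hb : ∀ i, a i * (D / a i) = D := fun i => Nat.mul_div_cancel' (hDa i)
  have hbpos : ∀ i, 0 < D / a i :=
    fun i => Nat.div_pos (Nat.le_of_dvd hD (hDa i)) (ha i)
  have key2 : ∀ (y : ∀ i, Fin (D / a i)) (z : Fin r → ℕ),
      ∑ i, a i * ((y i : ℕ) + (D / a i) * z i)
        = (∑ i, a i * (y i : ℕ)) + D * ∑ i, z i := by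
    intro y z
    rw [Finset.mul_sum, ← Finset.sum_add_distrib]
    refine Finset.sum_congr rfl fun i _ => ?_
    rw [Nat.mul_add, ← Nat.mul_assoc, hb i]
  have e : {x : Fin r → ℕ // ∑ i, a i * x i = n}
      ≃ (Σ y : (∀ i, Fin (D / a i)),
          {z : Fin r → ℕ // (∑ i, a i * (y i : ℕ)) + D * ∑ i, z i = n}) := by
    refine
      { toFun := fun x =>
          ⟨fun i => ⟨x.1 i % (D / a i), Nat.mod_lt _ (hbpos i)⟩,
            ⟨fun i => x.1 i / (D / a i), ?_⟩⟩,
        invFun := fun p =>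
          ⟨fun i => (p.1 i : ℕ) + (D / a i) * p.2.1 i, ?_⟩,
        left_inv := ?_, right_inv := ?_ }
    · show (∑ i, a i * (x.1 i % (D / a i))) + D * ∑ i, x.1 i / (D / a i) = n
      have hkey : (∑ i, a i * (x.1 i % (D / a i))) + D * ∑ i, x.1 i / (D / a i)
          = ∑ i, a i * x.1 i := by
        rw [Finset.mul_sum, ← Finset.sum_add_distrib]
        refine Finset.sum_congr rfl fun i _ => ?_
        conv_rhs => rw [← Nat.mod_add_div (x.1 i) (D / a i)]
        rw [Nat.mul_add, ← Nat.mul_assoc, hb i]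
      rw [hkey, x.2]
    · show ∑ i, a i * ((p.1 i : ℕ) + (D / a i) * p.2.1 i) = n
      rw [key2]
      exact p.2.2
    · intro x
      ext i
      exact Nat.mod_add_div _ _
    · rintro ⟨y, z⟩
      refine Sigma.subtype_ext ?_ ?_
      · funext i
        apply Fin.ext
        show ((y i : ℕ) + (D / a i) * z.1 i) % (D / a i) = (y i : ℕ)
        rw [Nat.add_mul_mod_self_left, Nat.mod_eq_of_lt (y i).2]
      · funext i
        show ((y i : ℕ) + (D / a i) * z.1 i) / (D / a i) = z.1 i
        rw [Nat.add_mul_div_left _ _ (hbpos i), Nat.div_eq_of_lt (y i).2, Nat.zero_add]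
  rw [Nat.card_congr e]
  haveI : ∀ y : (∀ i, Fin (D / a i)),
      Finite {z : Fin r → ℕ // (∑ i, a i * (y i : ℕ)) + D * ∑ i, z i = n} :=
    fun y => Z_finite r D _ n hD
  haveI : ∀ y : (∀ i, Fin (D / a i)),
      Fintype {z : Fin r → ℕ // (∑ i, a i * (y i : ℕ)) + D * ∑ i, z i = n} :=
    fun y => Fintype.ofFinite _
  rw [Nat.card_eq_fintype_card, Fintype.card_sigma]
  exact Finset.sum_congr rfl fun y _ => (Nat.card_eq_fintype_card).symm

noncomputable def Ppoly (r : ℕ) (a : Fin r → ℕ) (D j : ℕ) : Polynomial ℚ :=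
  ∑ y ∈ Finset.univ.filter
      (fun y : ∀ i, Fin (D / a i) => (∑ i, a i * (y i : ℕ)) % D = j),
    Tpoly (r - 1) D (∑ i, a i * (y i : ℕ))

lemma Ppoly_natDegree_le (r : ℕ) (a : Fin r → ℕ) (D j : ℕ) :
    (Ppoly r a D j).natDegree ≤ r - 1 :=
  Polynomial.natDegree_sum_le_of_forall_le _ _ fun y _ => Tpoly_natDegree_le _ _ _

lemma Ppoly_eval (r : ℕ) (hr : 1 ≤ r) (a : Fin r → ℕ) (ha : ∀ i, 0 < a i)
    (D : ℕ) (hD : 0 < D) (hDa : ∀ i, a i ∣ D) (n : ℕ) :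
    (Nat.card {x : Fin r → ℕ // ∑ i, a i * x i = n} : ℚ)
      = (Ppoly r a D (n % D)).eval (n : ℚ) := by
  have hb : ∀ i, a i * (D / a i) = D := fun i => Nat.mul_div_cancel' (hDa i)
  have hsplit : ∀ y : (∀ i, Fin (D / a i)),
      (Nat.card {z : Fin r → ℕ // (∑ i, a i * (y i : ℕ)) + D * ∑ i, z i = n} : ℚ)
        = if (∑ i, a i * (y i : ℕ)) % D = n % D
            then (Tpoly (r - 1) D (∑ i, a i * (y i : ℕ))).eval (n : ℚ) else 0 := by
    intro y
    have hsD : (∑ i, a i * (y i : ℕ)) < r * D := by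
      have hlt : ∀ i, a i * (y i : ℕ) < D := by
        intro i
        calc a i * (y i : ℕ) < a i * (D / a i) := mul_lt_mul_of_pos_left (y i).2 (ha i)
          _ = D := hb i
      calc (∑ i, a i * (y i : ℕ)) < ∑ _i : Fin r, D :=
          Finset.sum_lt_sum_of_nonempty (Finset.univ_nonempty_iff.2
            ⟨⟨0, by omega⟩⟩) fun i _ => hlt i
        _ = r * D := by simp [Finset.sum_const, Finset.card_univ, mul_comm]
    obtain ⟨s, hs⟩ : ∃ s, ∑ i, a i * (y i : ℕ) = s := ⟨_, rfl⟩
    rw [hs] at hsD ⊢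
    by_cases hy : s % D = n % D
    · rw [if_pos hy]
      by_cases hle : s ≤ n
      · have hdvd : D ∣ n - s :=
          Nat.dvd_of_mod_eq_zero (Nat.sub_mod_eq_zero_of_mod_eq hy.symm)
        obtain ⟨k, hk⟩ := hdvd
        have hnk : n = s + D * k := by omega
        rw [Zcard_eq r D s n k hr hD hnk, Tpoly_eval_of_eq (r - 1) D s k n hD hnk]
      · have hcard : Nat.card {z : Fin r → ℕ // s + D * ∑ i, z i = n} = 0 :=
          Zcard_zero r D s n (fun k hk => by omega)
        rw [hcard]
        clear hcard
        have hdvd : D ∣ s - n :=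
          Nat.dvd_of_mod_eq_zero (Nat.sub_mod_eq_zero_of_mod_eq hy)
        obtain ⟨j, hj⟩ := hdvd
        have hsn : s = n + D * j := by omega
        have hj1 : 1 ≤ j := by
          rcases Nat.eq_zero_or_pos j with h | h
          · subst h
            rw [Nat.mul_zero] at hj
            omega
          · exact h
        have hj2 : j ≤ r - 1 := by
          have h1 : j * D < r * D := by
            rw [Nat.mul_comm j D]
            omega
          have h2 : j < r := Nat.lt_of_mul_lt_mul_right h1
          omega
        rw [Tpoly_eval_of_gt (r - 1) D s n j hsn hj1 hj2, Nat.cast_zero]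
    · rw [if_neg hy]
      have hcard : Nat.card {z : Fin r → ℕ // s + D * ∑ i, z i = n} = 0 :=
        Zcard_zero r D s n (fun k hk => hy (by rw [hk, Nat.add_mul_mod_self_left]))
      rw [hcard, Nat.cast_zero]
  rw [decomp r a ha D hD hDa n, Nat.cast_sum]
  calc ∑ y : (∀ i, Fin (D / a i)),
        (Nat.card {z : Fin r → ℕ // (∑ i, a i * (y i : ℕ)) + D * ∑ i, z i = n} : ℚ)
      = ∑ y : (∀ i, Fin (D / a i)),
          if (∑ i, a i * (y i : ℕ)) % D = n % D
            then (Tpoly (r - 1) D (∑ i, a i * (y i : ℕ))).eval (n : ℚ) else 0 :=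
        Finset.sum_congr rfl fun y _ => hsplit y
    _ = ∑ y ∈ Finset.univ.filter
          (fun y : ∀ i, Fin (D / a i) => (∑ i, a i * (y i : ℕ)) % D = n % D),
          (Tpoly (r - 1) D (∑ i, a i * (y i : ℕ))).eval (n : ℚ) :=
        (Finset.sum_filter _ _).symm
    _ = (Ppoly r a D (n % D)).eval (n : ℚ) := by
        rw [Ppoly, Polynomial.eval_finset_sum]

lemma Ppoly_coeff_ne (r : ℕ) (hr : 1 ≤ r) (a : Fin r → ℕ) (ha : ∀ i, 0 < a i)
    (D : ℕ) (hD : 0 < D) (hDa : ∀ i, a i ∣ D) :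
    (Ppoly r a D 0).coeff (r - 1) ≠ 0 := by
  have hbpos : ∀ i, 0 < D / a i :=
    fun i => Nat.div_pos (Nat.le_of_dvd hD (hDa i)) (ha i)
  have hcoeff : (Ppoly r a D 0).coeff (r - 1)
      = (Finset.univ.filter (fun y : ∀ i, Fin (D / a i) =>
          (∑ i, a i * (y i : ℕ)) % D = 0)).card
        • ((((r - 1).factorial : ℚ) * (D : ℚ) ^ (r - 1))⁻¹) := by
    rw [Ppoly, Polynomial.finset_sum_coeff,
      Finset.sum_congr rfl fun y _ => Tpoly_coeff_q (r - 1) D _, Finset.sum_const]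
  rw [hcoeff, nsmul_eq_mul]
  have hne : ((((r - 1).factorial : ℚ)) * (D : ℚ) ^ (r - 1))⁻¹ ≠ 0 :=
    inv_ne_zero (mul_ne_zero (Nat.cast_ne_zero.2 (r - 1).factorial_ne_zero)
      (pow_ne_zero _ (Nat.cast_ne_zero.2 hD.ne')))
  have hcard : 0 < (Finset.univ.filter (fun y : ∀ i, Fin (D / a i) =>
      (∑ i, a i * (y i : ℕ)) % D = 0)).card := by
    refine Finset.card_pos.2 ⟨fun i => ⟨0, hbpos i⟩, ?_⟩
    simp
  exact mul_ne_zero (Nat.cast_ne_zero.2 hcard.ne') hne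

/-- `p_a(n)` is a quasi-polynomial of degree `r-1` with period `D`: there are
coefficient functions `c_0,…,c_{r-1} : ℕ → ℚ`, each periodic with period `D`,
with `p_a(n) = ∑ c_m(n) n^m`, and the leading coefficient `c_{r-1}` is not
identically zero. -/
theorem stmt_1 (r : ℕ) (hr : 2 ≤ r) (a : Fin r → ℕ) (ha : ∀ i, 0 < a i)
    (D : ℕ) (hD : 0 < D) (hDa : ∀ i, a i ∣ D) :
    ∃ c : Fin r → ℕ → ℚ,
      (∀ m : Fin r, ∀ n : ℕ, c m (n + D) = c m n) ∧
      (∀ n : ℕ, (Set.ncard {x : Fin r → ℕ | ∑ i, a i * x i = n} : ℚ)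
          = ∑ m : Fin r, c m n * (n : ℚ) ^ (m : ℕ)) ∧
      (∃ n : ℕ, c ⟨r - 1, by omega⟩ n ≠ 0) := by
  refine ⟨fun m n => (Ppoly r a D (n % D)).coeff (m : ℕ), ?_, ?_, ?_⟩
  · intro m n
    show (Ppoly r a D ((n + D) % D)).coeff (m : ℕ) = (Ppoly r a D (n % D)).coeff (m : ℕ)
    rw [Nat.add_mod_right]
  · intro n
    have h0 : ({x : Fin r → ℕ | ∑ i, a i * x i = n}.ncard : ℚ)
        = (Nat.card {x : Fin r → ℕ // ∑ i, a i * x i = n} : ℚ) := by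
      exact congrArg _ (Nat.card_coe_set_eq _).symm
    rw [h0, Ppoly_eval r (by omega) a ha D hD hDa n,
      Polynomial.eval_eq_sum_range' (n := r)
        (lt_of_le_of_lt (Ppoly_natDegree_le r a D _) (by omega))]
    exact (Fin.sum_univ_eq_sum_range
      (fun m => (Ppoly r a D (n % D)).coeff m * (n : ℚ) ^ m) r).symm
  · refine ⟨0, ?_⟩
    show (Ppoly r a D (0 % D)).coeff ((⟨r - 1, by omega⟩ : Fin r) : ℕ) ≠ 0
    rw [Nat.zero_mod]
    exact Ppoly_coeff_ne r (by omega) a ha D hD hDa
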